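/- arXiv:1804.10903 — 5 statements merged into one kernel-verified Lean document; each statement's English description precedes it below -/
import Mathlib

section
/- For quaternions p and s with s ∉ [p], the slice-regular Cauchy kernel inverse satisfies the identity (p² - 2 Re(s) p + |s|²)⁻¹ (p - s̄) = ((p - s̄)⁻¹ p (p - s̄) - s)⁻¹. -/
open Quaternion

/-- The 2-sphere `[p]` associated to a quaternion `p`. -/
def quatSphere (p : ℍ[ℝ]) : Set ℍ[ℝ] :=
  {q : ℍ[ℝ] | q.re = p.re ∧ ‖q.im‖ = ‖p.im‖}

/-- The polynomial factorization of the quadratic. -/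
theorem cauchyKernel_keyfact (p s : ℍ[ℝ]) :
    (p ^ 2 - 2 * ((s.re : ℝ) : ℍ[ℝ]) * p + ((‖s‖ ^ 2 : ℝ) : ℍ[ℝ]))
      = p*(p - star s) - (p - star s)*s := by
  have h4 : 2 * ((s.re:ℝ):ℍ[ℝ]) = (((2*s.re : ℝ)):ℍ[ℝ]) := by
    rw [← Quaternion.self_add_star, Quaternion.self_add_star']
  have h1 : s + star s = (((2*s.re : ℝ)):ℍ[ℝ]) := Quaternion.self_add_star' s
  have h2 : star s * s = ((‖s‖^2 : ℝ):ℍ[ℝ]) := by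
    rw [Quaternion.star_mul_self, Quaternion.normSq_eq_norm_mul_self]
    push_cast; rw [sq]
  calc (p ^ 2 - 2 * ((s.re : ℝ) : ℍ[ℝ]) * p + ((‖s‖ ^ 2 : ℝ) : ℍ[ℝ]))
      = p^2 - p*(s + star s) + star s * s := by
        rw [h2, h1, h4, Quaternion.coe_commutes]
    _ = p*(p - star s) - (p - star s)*s := by noncomm_ring

/-- For `s ∉ [p]` the quadratic is nonzero. -/
theorem cauchyKernel_denom_ne_zero (p s : ℍ[ℝ]) (hs : s ∉ quatSphere p) :
    (p ^ 2 - 2 * ((s.re : ℝ) : ℍ[ℝ]) * p + ((‖s‖ ^ 2 : ℝ) : ℍ[ℝ])) ≠ 0 := by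
  intro h
  apply hs
  have h4 : 2 * ((s.re:ℝ):ℍ[ℝ]) = (((2*s.re : ℝ)):ℍ[ℝ]) := by
    rw [← Quaternion.self_add_star, Quaternion.self_add_star']
  rw [h4] at h
  have hnorm : ‖s‖^2 = s.re^2 + s.imI^2 + s.imJ^2 + s.imK^2 := by
    have := Quaternion.normSq_eq_norm_mul_self s
    rw [Quaternion.normSq_def'] at this
    rw [sq, ← this]
  rw [Quaternion.ext_iff] at h
  simp only [Quaternion.re_sub, Quaternion.re_add, Quaternion.re_mul, Quaternion.imI_mul,
    Quaternion.imJ_mul, Quaternion.imK_mul, Quaternion.imI_sub, Quaternion.imI_add,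
    Quaternion.imJ_sub, Quaternion.imJ_add, Quaternion.imK_sub, Quaternion.imK_add,
    Quaternion.re_coe, Quaternion.imI_coe, Quaternion.imJ_coe, Quaternion.imK_coe,
    pow_two, Quaternion.re_zero, Quaternion.imI_zero, Quaternion.imJ_zero, Quaternion.imK_zero]
    at h
  obtain ⟨h1, h2, h3, hk⟩ := h
  have hre : s.re = p.re := by
    by_contra hne
    have hne' : p.re - s.re ≠ 0 := fun hc => hne (by linarith)
    have hb : p.imI = 0 := by
      have : p.imI * (p.re - s.re) = 0 := by linear_combination h2 / 2
      exact (mul_eq_zero.mp this).resolve_right hne'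
    have hc : p.imJ = 0 := by
      have : p.imJ * (p.re - s.re) = 0 := by linear_combination h3 / 2
      exact (mul_eq_zero.mp this).resolve_right hne'
    have hd : p.imK = 0 := by
      have : p.imK * (p.re - s.re) = 0 := by linear_combination hk / 2
      exact (mul_eq_zero.mp this).resolve_right hne'
    apply hne
    nlinarith [h1, hnorm, hb, hc, hd, sq_nonneg (s.re - p.re), sq_nonneg s.imI,
      sq_nonneg s.imJ, sq_nonneg s.imK]
  refine ⟨hre, ?_⟩
  have hsq : normSq s.im = normSq p.im := by
    rw [Quaternion.normSq_def', Quaternion.normSq_def']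
    simp only [Quaternion.re_im, Quaternion.imI_im, Quaternion.imJ_im, Quaternion.imK_im]
    nlinarith [hnorm, h1, hre]
  have e1 : ‖s.im‖ = Real.sqrt (normSq s.im) := by
    rw [norm_eq_sqrt_real_inner, Quaternion.inner_self]
  have e2 : ‖p.im‖ = Real.sqrt (normSq p.im) := by
    rw [norm_eq_sqrt_real_inner, Quaternion.inner_self]
  rw [e1, e2, hsq]

/-- For `s ∉ [p]`, the slice-regular Cauchy kernel satisfies
`(p² - 2 Re(s) p + |s|²)⁻¹ (p - s̄) = ((p - s̄)⁻¹ p (p - s̄) - s)⁻¹`. -/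
theorem cauchyKernel_eq (p s : ℍ[ℝ]) (hs : s ∉ quatSphere p) :
    (p ^ 2 - 2 * ((s.re : ℝ) : ℍ[ℝ]) * p + ((‖s‖ ^ 2 : ℝ) : ℍ[ℝ]))⁻¹ * (p - star s)
      = ((p - star s)⁻¹ * p * (p - star s) - s)⁻¹ := by
  have hD := cauchyKernel_denom_ne_zero p s hs
  have keyfact := cauchyKernel_keyfact p s
  have hps : p - star s ≠ 0 := by
    intro h
    apply hs
    have hp : p = star s := by rwa [sub_eq_zero] at h
    have hsp : s = star p := by rw [hp, star_star]
    constructor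
    · rw [hsp, Quaternion.re_star]
    · rw [hsp]
      have : (star p).im = -p.im := QuaternionAlgebra.im_star p
      rw [this, norm_neg]
  have key : (p ^ 2 - 2 * ((s.re : ℝ) : ℍ[ℝ]) * p + ((‖s‖ ^ 2 : ℝ) : ℍ[ℝ]))
      = (p - star s) * ((p - star s)⁻¹ * p * (p - star s) - s) := by
    rw [keyfact]
    conv_rhs => rw [mul_sub, ← mul_assoc, ← mul_assoc, mul_inv_cancel₀ hps, one_mul]
  rw [key, mul_inv_rev, mul_assoc, inv_mul_cancel₀ hps, mul_one]
end

section
/- For quaternions p and s with s ∉ [p], the quadratic characteristic polynomial is nonzero: p² - 2 Re(s) p + |s|² ≠ 0. -/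
open Quaternion

lemma norm_sq_eq (s : ℍ[ℝ]) : ‖s‖^2 = s.re^2 + s.imI^2 + s.imJ^2 + s.imK^2 := by
  rw [pow_two, ← Quaternion.normSq_eq_norm_mul_self, Quaternion.normSq_def']

lemma norm_im_sq_eq (s : ℍ[ℝ]) : ‖s.im‖^2 = s.imI^2 + s.imJ^2 + s.imK^2 := by
  rw [pow_two, ← Quaternion.normSq_eq_norm_mul_self, Quaternion.normSq_def']; simp

/-- For `s ∉ [p]`, the characteristic polynomial `p² - 2 Re(s) p + |s|²` is nonzero. -/
theorem charPoly_ne_zero (p s : ℍ[ℝ]) (hs : s ∉ quatSphere p) :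
    p ^ 2 - 2 * ((s.re : ℝ) : ℍ[ℝ]) * p + ((‖s‖ ^ 2 : ℝ) : ℍ[ℝ]) ≠ 0 := by
  intro h
  apply hs
  rw [Quaternion.ext_iff] at h
  simp only [pow_two, Quaternion.re_mul, Quaternion.imI_mul, Quaternion.imJ_mul,
    Quaternion.imK_mul, (show QuaternionAlgebra.re (2:ℍ[ℝ]) = 2 from rfl),
    (show QuaternionAlgebra.imI (2:ℍ[ℝ]) = 0 from rfl), (show QuaternionAlgebra.imJ (2:ℍ[ℝ]) = 0 from rfl),
    (show QuaternionAlgebra.imK (2:ℍ[ℝ]) = 0 from rfl), Quaternion.re_coe, Quaternion.imI_coe, Quaternion.imJ_coe,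
    Quaternion.imK_coe, Quaternion.re_sub, Quaternion.imI_sub, Quaternion.imJ_sub,
    Quaternion.imK_sub, Quaternion.re_add, Quaternion.imI_add, Quaternion.imJ_add,
    Quaternion.imK_add, Quaternion.re_zero, Quaternion.imI_zero, Quaternion.imJ_zero,
    Quaternion.imK_zero] at h
  obtain ⟨h1, h2, h3, h4⟩ := h
  ring_nf at h1 h2 h3 h4
  have hns := norm_sq_eq s
  have key : s.re = p.re ∧ ‖s.im‖^2 = ‖p.im‖^2 := by
    rw [norm_im_sq_eq s, norm_im_sq_eq p]
    by_cases hp : p.imI = 0 ∧ p.imJ = 0 ∧ p.imK = 0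
    · obtain ⟨hi, hj, hk⟩ := hp
      constructor
      · nlinarith [sq_nonneg (p.re - s.re), sq_nonneg s.imI, sq_nonneg s.imJ, sq_nonneg s.imK]
      · nlinarith [sq_nonneg (p.re - s.re)]
    · have hre : s.re = p.re := by
        rcases not_and_or.mp hp with hi | h'
        · rcases mul_eq_zero.mp (show p.imI * (p.re - s.re) = 0 by linear_combination h2 / 2)
            with h | h
          · exact absurd h hi
          · linarith
        rcases not_and_or.mp h' with hj | hk
        · rcases mul_eq_zero.mp (show p.imJ * (p.re - s.re) = 0 by linear_combination h3 / 2)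
            with h | h
          · exact absurd h hj
          · linarith
        · rcases mul_eq_zero.mp (show p.imK * (p.re - s.re) = 0 by linear_combination h4 / 2)
            with h | h
          · exact absurd h hk
          · linarith
      exact ⟨hre, by nlinarith⟩
  refine ⟨key.1, ?_⟩
  have := key.2
  nlinarith [norm_nonneg s.im, norm_nonneg p.im]
end

section
/- For quaternions p, s with s ∉ [p], the quantity |(p² - 2 Re(s) p + |s|²)⁻¹ (p - s̄)| is bounded above by (dist([p], s))⁻¹, where dist([p], s) = inf{|q - s| : q ∈ [p]}. -/
open Quaternion

private lemma quat_norm_sq_eq (x : ℍ[ℝ]) : ‖x‖ ^ 2 = x.re ^ 2 + ‖x.im‖ ^ 2 := by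
  have h1 : ‖x‖ ^ 2 = normSq x := by rw [sq, ← normSq_eq_norm_mul_self]
  have h2 : ‖x.im‖ ^ 2 = normSq x.im := by rw [sq, ← normSq_eq_norm_mul_self]
  rw [h1, h2, normSq_def', normSq_def']
  simp [Quaternion.re_im]
  ring

private lemma norm_coe_add_sq (r : ℝ) (w : ℍ[ℝ]) (hw : w.re = 0) :
    ‖(r : ℍ[ℝ]) + w‖ ^ 2 = r ^ 2 + ‖w‖ ^ 2 := by
  have him : w.im = w := by
    have := w.re_add_im
    rwa [hw, Quaternion.coe_zero, zero_add] at this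
  rw [quat_norm_sq_eq]
  simp [Quaternion.re_add, Quaternion.im_add, Quaternion.re_coe, Quaternion.im_coe, hw, him]

private lemma le_of_sq_le_sq' {x y : ℝ} (h : x ^ 2 ≤ y ^ 2) (hx : 0 ≤ x) (hy : 0 ≤ y) :
    x ≤ y := by
  have h2 := Real.sqrt_le_sqrt h
  rwa [Real.sqrt_sq hx, Real.sqrt_sq hy] at h2

private lemma exists_unit_dir (x : ℍ[ℝ]) :
    ∃ u : ℍ[ℝ], u.re = 0 ∧ ‖u‖ = 1 ∧ x.im = ‖x.im‖ • u := by
  by_cases h : x.im = 0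
  · refine ⟨(Complex.I : ℍ[ℝ]), ?_, ?_, by simp [h]⟩
    · rw [Quaternion.re_coeComplex, Complex.I_re]
    · have h1 : normSq ((Complex.I : ℂ) : ℍ[ℝ]) = 1 := by
        simp [normSq_def']
      have h2 := normSq_eq_norm_mul_self ((Complex.I : ℂ) : ℍ[ℝ])
      nlinarith [norm_nonneg ((Complex.I : ℂ) : ℍ[ℝ])]
  · have hn : ‖x.im‖ ≠ 0 := norm_ne_zero_iff.mpr h
    refine ⟨‖x.im‖⁻¹ • x.im, ?_, ?_, ?_⟩
    · simp [Quaternion.re_smul, Quaternion.re_im]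
    · rw [norm_smul (‖x.im‖⁻¹) x.im, norm_inv, norm_norm, inv_mul_cancel₀ hn]
    · rw [smul_smul, mul_inv_cancel₀ hn, one_smul]

set_option maxHeartbeats 1000000 in
/-- For `s ∉ [p]`, `|(p² - 2 Re(s) p + |s|²)⁻¹ (p - s̄)| ≤ dist([p], s)⁻¹`. -/
theorem kernel_norm_le_infDist (p s : ℍ[ℝ]) (hs : s ∉ quatSphere p) :
    ‖(p ^ 2 - 2 * ((s.re : ℝ) : ℍ[ℝ]) * p + ((‖s‖ ^ 2 : ℝ) : ℍ[ℝ]))⁻¹ * (p - star s)‖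
      ≤ 1 / Metric.infDist s (quatSphere p) := by
  obtain ⟨u, hure, hun, hpim⟩ := exists_unit_dir p
  obtain ⟨v, hvre, hvn, hsim⟩ := exists_unit_dir s
  set a : ℝ := s.re with ha
  set b : ℝ := ‖s.im‖ with hb
  set c : ℝ := ‖p.im‖ with hc
  clear_value a b c
  have hb0 : 0 ≤ b := by rw [hb]; exact norm_nonneg _
  have hc0 : 0 ≤ c := by rw [hc]; exact norm_nonneg _
  have hp : p = (p.re : ℍ[ℝ]) + c • u := by rw [← hpim, p.re_add_im]
  have hsdec : s = (a : ℍ[ℝ]) + b • v := by rw [ha, ← hsim, s.re_add_im]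
  set q : ℍ[ℝ] := (a : ℍ[ℝ]) + b • u with hq
  clear_value q
  have hstarq : star q = (a : ℍ[ℝ]) + (-b) • u := by
    have hu : star u = -u := Quaternion.star_eq_neg.mpr hure
    rw [hq, star_add, Quaternion.star_smul, hu, Quaternion.star_coe, smul_neg, neg_smul]
  -- norms of the factors
  have hnorm_pq : ‖p - q‖ ^ 2 = (p.re - a) ^ 2 + (c - b) ^ 2 := by
    have h1 : p - q = ((p.re - a : ℝ) : ℍ[ℝ]) + (c - b) • u := by
      conv_lhs => rw [hp, hq]
      push_cast
      rw [sub_smul]; abel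
    rw [h1, norm_coe_add_sq _ _ (by simp [Quaternion.re_smul, hure]),
      norm_smul, hun, mul_one, Real.norm_eq_abs, sq_abs]
  have hnorm_pq' : ‖p - star q‖ ^ 2 = (p.re - a) ^ 2 + (c + b) ^ 2 := by
    have h1 : p - star q = ((p.re - a : ℝ) : ℍ[ℝ]) + (c + b) • u := by
      conv_lhs => rw [hp, hstarq]
      push_cast
      rw [add_smul, neg_smul]; abel
    rw [h1, norm_coe_add_sq _ _ (by simp [Quaternion.re_smul, hure]),
      norm_smul, hun, mul_one, Real.norm_eq_abs, sq_abs]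
  have hnorm_ps : ‖p - star s‖ ^ 2 = (p.re - a) ^ 2 + ‖p.im + s.im‖ ^ 2 := by
    have hstars : star s = (a : ℍ[ℝ]) - s.im := by
      rw [ha]
      ext <;> simp
    have h1 : p - star s = ((p.re - a : ℝ) : ℍ[ℝ]) + (p.im + s.im) := by
      rw [hstars]; nth_rewrite 1 [← p.re_add_im]; push_cast; abel
    rw [h1, norm_coe_add_sq _ _ (by simp [Quaternion.re_add, Quaternion.re_im])]
  -- key comparison ‖p - star s‖ ≤ ‖p - star q‖
  have hcomp : ‖p - star s‖ ≤ ‖p - star q‖ := by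
    have h1 : ‖p.im + s.im‖ ≤ c + b := by
      calc ‖p.im + s.im‖ ≤ ‖p.im‖ + ‖s.im‖ := norm_add_le _ _
        _ = c + b := by rw [hc, hb]
    have h2 : ‖p - star s‖ ^ 2 ≤ ‖p - star q‖ ^ 2 := by
      rw [hnorm_ps, hnorm_pq']
      nlinarith [norm_nonneg (p.im + s.im)]
    exact le_of_sq_le_sq' h2 (norm_nonneg _) (norm_nonneg _)
  -- factorization
  have hqre : q.re = a := by simp [hq, Quaternion.re_add, Quaternion.re_coe,
    Quaternion.re_smul, hure]
  have hcomm : q * p = p * q := by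
    have h : Commute q p := by
      rw [hp, hq]
      exact ((Quaternion.coe_commute a _).add_right
          (((Quaternion.coe_commute a u).smul_right c))).add_left
        (((Quaternion.coe_commute p.re u).symm.smul_left b).add_right
          (((Commute.refl u).smul_left b).smul_right c))
    exact h
  have hnormq : ‖q‖ ^ 2 = a ^ 2 + b ^ 2 := by
    rw [hq, norm_coe_add_sq _ _ (by simp [Quaternion.re_smul, hure]),
      norm_smul, hun, mul_one, Real.norm_eq_abs, sq_abs]
  have hnorms : ‖s‖ ^ 2 = a ^ 2 + b ^ 2 := by rw [quat_norm_sq_eq, ← ha, ← hb]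
  have hmulq : q * star q = ((‖s‖ ^ 2 : ℝ) : ℍ[ℝ]) := by
    rw [self_mul_star]
    congr 1
    rw [hnorms, ← hnormq, sq, ← normSq_eq_norm_mul_self]
  have hsumq : q + star q = ((2 * a : ℝ) : ℍ[ℝ]) := by rw [q.self_add_star', hqre]
  have hfac : p ^ 2 - 2 * ((a : ℝ) : ℍ[ℝ]) * p + ((‖s‖ ^ 2 : ℝ) : ℍ[ℝ])
      = (p - q) * (p - star q) := by
    have expand : (p - q) * (p - star q)
        = p * p - p * (q + star q) + q * star q := by
      calc (p - q) * (p - star q)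
          = p * p - p * star q - q * p + q * star q := by noncomm_ring
        _ = p * p - p * (q + star q) + q * star q := by rw [hcomm]; noncomm_ring
    rw [expand, hsumq, hmulq]
    have h2 : p * ((2 * a : ℝ) : ℍ[ℝ]) = 2 * ((a : ℝ) : ℍ[ℝ]) * p := by
      rw [← Quaternion.coe_commutes]
      push_cast
      rfl
    rw [sq, h2]
  -- membership characterization
  have hsmem : ¬(a = p.re ∧ b = c) := by
    intro hmem
    exact hs ⟨by rw [← ha]; exact hmem.1, by rw [← hb, hmem.2, hc]⟩
  set d : ℝ := ‖p - q‖ with hd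
  clear_value d
  have hd0 : 0 ≤ d := by rw [hd]; exact norm_nonneg _
  have hdpos : 0 < d := by
    rcases hd0.lt_or_eq with h | h
    · exact h
    · exfalso
      apply hsmem
      have h2 : (p.re - a) ^ 2 + (c - b) ^ 2 = 0 := by rw [← hnorm_pq, ← h]; ring
      constructor <;> nlinarith [sq_nonneg (p.re - a), sq_nonneg (c - b)]
  have hdq' : d ≤ ‖p - star q‖ := by
    have h2 : d ^ 2 ≤ ‖p - star q‖ ^ 2 := by
      rw [hnorm_pq, hnorm_pq']
      nlinarith
    exact le_of_sq_le_sq' h2 hd0 (norm_nonneg _)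
  have hpq'pos : 0 < ‖p - star q‖ := lt_of_lt_of_le hdpos hdq'
  -- the quadratic is nonzero
  have hQne : (p ^ 2 - 2 * ((a : ℝ) : ℍ[ℝ]) * p + ((‖s‖ ^ 2 : ℝ) : ℍ[ℝ])) ≠ 0 := by
    rw [hfac]
    have hdpos' : 0 < ‖p - q‖ := by rw [← hd]; exact hdpos
    exact mul_ne_zero (norm_pos_iff.mp hdpos') (norm_pos_iff.mp hpq'pos)
  -- infDist equals d
  have hw_mem : ((p.re : ℍ[ℝ]) + c • v) ∈ quatSphere p := by
    constructor
    · simp [Quaternion.re_add, Quaternion.re_coe, Quaternion.re_smul, hvre]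
    · have him : ((p.re : ℍ[ℝ]) + c • v).im = c • v := by
        have hv : v.im = v := by
          have := v.re_add_im
          rwa [hvre, Quaternion.coe_zero, zero_add] at this
        simp [Quaternion.im_add, Quaternion.im_coe, Quaternion.im_smul, hv]
      rw [him, norm_smul, hvn, mul_one, Real.norm_eq_abs, abs_of_nonneg hc0, hc]
  have hdist_w : dist s ((p.re : ℍ[ℝ]) + c • v) = d := by
    rw [dist_eq_norm]
    have h1 : s - ((p.re : ℍ[ℝ]) + c • v) = ((a - p.re : ℝ) : ℍ[ℝ]) + (b - c) • v := by
      rw [hsdec]; push_cast; rw [sub_smul]; abel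
    have h2 : ‖s - ((p.re : ℍ[ℝ]) + c • v)‖ ^ 2 = d ^ 2 := by
      rw [h1, norm_coe_add_sq _ _ (by simp [Quaternion.re_smul, hvre]),
        norm_smul, hvn, mul_one, Real.norm_eq_abs, sq_abs, hnorm_pq]
      ring
    rw [← Real.sqrt_sq (norm_nonneg (s - ((p.re : ℍ[ℝ]) + c • v))), h2, Real.sqrt_sq hd0]
  have hlower : ∀ t ∈ quatSphere p, d ≤ dist s t := by
    rintro t ⟨htre, htim⟩
    rw [dist_eq_norm]
    have h1 : s - t = ((a - p.re : ℝ) : ℍ[ℝ]) + (s.im - t.im) := by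
      rw [ha]
      nth_rewrite 1 [← s.re_add_im]
      nth_rewrite 1 [← t.re_add_im]
      rw [htre]; push_cast; abel
    have h2 : ‖s - t‖ ^ 2 = (a - p.re) ^ 2 + ‖s.im - t.im‖ ^ 2 := by
      rw [h1, norm_coe_add_sq _ _ (by simp [Quaternion.re_sub, Quaternion.re_im])]
    have h3 : |b - c| ≤ ‖s.im - t.im‖ := by
      rw [hb, hc]
      have := abs_norm_sub_norm_le s.im t.im
      rwa [htim] at this
    have h4 : (b - c) ^ 2 ≤ ‖s.im - t.im‖ ^ 2 := by
      nlinarith [abs_nonneg (b - c), sq_abs (b - c)]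
    have h5 : d ^ 2 ≤ ‖s - t‖ ^ 2 := by
      rw [hnorm_pq, h2]
      nlinarith
    exact le_of_sq_le_sq' h5 hd0 (norm_nonneg _)
  have hne : (quatSphere p).Nonempty := ⟨p, rfl, rfl⟩
  have hinf_le : Metric.infDist s (quatSphere p) ≤ d := by
    calc Metric.infDist s (quatSphere p) ≤ dist s ((p.re : ℍ[ℝ]) + c • v) :=
        Metric.infDist_le_dist_of_mem hw_mem
      _ = d := hdist_w
  have hinf_ge : d ≤ Metric.infDist s (quatSphere p) := by
    by_contra h
    push_neg at h
    obtain ⟨y, hy, hlt⟩ := (Metric.infDist_lt_iff hne).mp h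
    exact absurd (hlower y hy) (not_le.mpr hlt)
  have hinf : Metric.infDist s (quatSphere p) = d := le_antisymm hinf_le hinf_ge
  rw [hinf, hfac]
  rw [norm_mul, norm_inv, norm_mul, ← hd]
  calc (d * ‖p - star q‖)⁻¹ * ‖p - star s‖
      ≤ (d * ‖p - star q‖)⁻¹ * ‖p - star q‖ :=
        mul_le_mul_of_nonneg_left hcomp (by positivity)
    _ = 1 / d := by
        have h1 : d ≠ 0 := hdpos.ne'
        have h2 : ‖p - star q‖ ≠ 0 := hpq'pos.ne'
        field_simp
end

section
/- Let p, s ∈ H with s ∉ [p] and suppose s ∈ ℂ_j for some purely imaginary unit quaternion j. Writing p = u + j_p v with p_j = u + j v ∈ ℂ_j, the function φ_s(p) = (p² - 2Re(s)p + |s|²)⁻² (p - s̄)^{2⋆} satisfies |φ_s(p)| ≤ |p_j - s|⁻² + |p̄_j - s|⁻² ≤ 2 (dist([p], s))⁻². -/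
open Quaternion

/-- The complex slice `ℂ_j`. -/
def sliceSet (j : ℍ[ℝ]) : Set ℍ[ℝ] :=
  {q : ℍ[ℝ] | ∃ x y : ℝ, q = ((x : ℝ) : ℍ[ℝ]) + y • j}

/-- `φ_s(p) = (p² - 2 Re(s) p + |s|²)⁻² (p - s̄)^{2⋆}`. -/
noncomputable def phiFun (s p : ℍ[ℝ]) : ℍ[ℝ] :=
  ((p ^ 2 - 2 * ((s.re : ℝ) : ℍ[ℝ]) * p + ((‖s‖ ^ 2 : ℝ) : ℍ[ℝ])) ^ 2)⁻¹ *
    (p ^ 2 - 2 * p * star s + (star s) ^ 2)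

lemma coe_eq_smul_one (r : ℝ) : ((r : ℝ) : ℍ[ℝ]) = r • (1 : ℍ[ℝ]) := by
  rw [show (1 : ℍ[ℝ]) = ((1:ℝ) : ℍ[ℝ]) from rfl, Quaternion.smul_coe, mul_one]

lemma unit_im_sq (K : ℍ[ℝ]) (h0 : K.re = 0) (h1 : ‖K‖ = 1) : K * K = -1 := by
  have hs : star K = -K := Quaternion.star_eq_neg.mpr h0
  have := Quaternion.self_mul_star (a := K)
  rw [hs, mul_neg, Quaternion.normSq_eq_norm_mul_self, h1] at this
  simpa [neg_eq_iff_eq_neg] using this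

lemma mul_formula (K : ℍ[ℝ]) (hK2 : K * K = -1) (a b c d : ℝ) :
    (((a : ℝ) : ℍ[ℝ]) + b • K) * (((c : ℝ) : ℍ[ℝ]) + d • K)
      = (((a*c - b*d : ℝ)) : ℍ[ℝ]) + (a*d + b*c) • K := by
  have h : (b • K) * (d • K) = (b*d) • (K*K) := by
    rw [smul_mul_assoc, mul_smul_comm, smul_smul, mul_comm]
  simp only [add_mul, mul_add, h, hK2, Quaternion.coe_mul_eq_smul,
    Quaternion.mul_coe_eq_smul, Quaternion.smul_coe, smul_smul, smul_neg, smul_mul_assoc]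
  rw [coe_eq_smul_one (c*a), coe_eq_smul_one (a*c - b*d)]
  module

lemma star_formula (K : ℍ[ℝ]) (h0 : K.re = 0) (a b : ℝ) :
    star (((a : ℝ) : ℍ[ℝ]) + b • K) = ((a : ℝ) : ℍ[ℝ]) + (-b) • K := by
  rw [star_add, Quaternion.star_smul (R:=ℝ), Quaternion.star_coe,
    Quaternion.star_eq_neg.mpr h0]
  simp

lemma norm_sq_formula (K : ℍ[ℝ]) (h0 : K.re = 0) (h1 : ‖K‖ = 1) (a b : ℝ) :
    ‖((a : ℝ) : ℍ[ℝ]) + b • K‖ ^ 2 = a ^ 2 + b ^ 2 := by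
  have hK2 := unit_im_sq K h0 h1
  have h := Quaternion.self_mul_star (a := ((a : ℝ) : ℍ[ℝ]) + b • K)
  rw [star_formula K h0, mul_formula K hK2] at h
  have : Quaternion.normSq (((a : ℝ) : ℍ[ℝ]) + b • K) = a^2 + b^2 := by
    have h2 : (((a*a - b*(-b) : ℝ)) : ℍ[ℝ]) + (a*(-b) + b*a) • K
        = ((Quaternion.normSq (((a : ℝ) : ℍ[ℝ]) + b • K) : ℝ) : ℍ[ℝ]) := h
    simp only [mul_neg, sub_neg_eq_add, neg_mul] at h2
    rw [show -(a*b) + b*a = 0 by ring, zero_smul, add_zero] at h2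
    have := Quaternion.coe_injective h2
    rw [← this]; ring
  rw [sq, ← Quaternion.normSq_eq_norm_mul_self, this]

noncomputable section
def AA (x y : ℝ) (s : ℍ[ℝ]) : ℝ := x^2 - y^2 - 2*s.re*x + ‖s‖^2
def BB (x y : ℝ) (s : ℍ[ℝ]) : ℝ := 2*x*y - 2*s.re*y
def A2 (x y : ℝ) (s : ℍ[ℝ]) : ℝ := (AA x y s)^2 - (BB x y s)^2
def B2 (x y : ℝ) (s : ℍ[ℝ]) : ℝ := 2 * AA x y s * BB x y s
def DD (x y : ℝ) (s : ℍ[ℝ]) : ℝ := (A2 x y s)^2 + (B2 x y s)^2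
def EE (x y : ℝ) (s : ℍ[ℝ]) : ℍ[ℝ] :=
  ((x^2 - y^2 : ℝ) : ℍ[ℝ]) - (2*x) • star s + (star s)^2
def GG (x y : ℝ) (s : ℍ[ℝ]) : ℍ[ℝ] := (2*y) • (((x:ℝ) : ℍ[ℝ]) - star s)
def alphaQ (x y : ℝ) (s : ℍ[ℝ]) : ℍ[ℝ] :=
  (DD x y s)⁻¹ • ((A2 x y s) • EE x y s + (B2 x y s) • GG x y s)
def betaQ (x y : ℝ) (s : ℍ[ℝ]) : ℍ[ℝ] :=
  (DD x y s)⁻¹ • ((A2 x y s) • GG x y s - (B2 x y s) • EE x y s)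
end

lemma key_lemma (K : ℍ[ℝ]) (h0 : K.re = 0) (h1 : ‖K‖ = 1) (x y : ℝ) (s : ℍ[ℝ]) :
    phiFun s (((x:ℝ) : ℍ[ℝ]) + y • K) = alphaQ x y s + K * betaQ x y s := by
  have hK2 := unit_im_sq K h0 h1
  set q : ℍ[ℝ] := ((x:ℝ) : ℍ[ℝ]) + y • K with hq
  have two_coe : (2 : ℍ[ℝ]) = ((2 : ℝ) : ℍ[ℝ]) := by norm_cast
  have hq2 : q^2 = (((x^2 - y^2 : ℝ)) : ℍ[ℝ]) + (2*x*y) • K := by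
    rw [sq, hq, mul_formula K hK2, show x*x - y*y = x^2 - y^2 from by ring,
      show x*y + y*x = 2*x*y from by ring]
  have hQ : q^2 - 2*((s.re : ℝ) : ℍ[ℝ])*q + ((‖s‖^2 : ℝ) : ℍ[ℝ])
      = ((AA x y s : ℝ) : ℍ[ℝ]) + (BB x y s) • K := by
    have h2s : 2*((s.re : ℝ) : ℍ[ℝ]) * q = (((2*s.re*x : ℝ)) : ℍ[ℝ]) + (2*s.re*y) • K := by
      rw [hq, two_coe, ← Quaternion.coe_mul, mul_add, ← Quaternion.coe_mul,
        mul_smul_comm, Quaternion.coe_mul_eq_smul, smul_smul]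
      ring_nf
    rw [hq2, h2s, AA, BB]
    simp only [coe_eq_smul_one]
    match_scalars <;> ring
  have hQ2 : (q^2 - 2*((s.re : ℝ) : ℍ[ℝ])*q + ((‖s‖^2 : ℝ) : ℍ[ℝ]))^2
      = ((A2 x y s : ℝ) : ℍ[ℝ]) + (B2 x y s) • K := by
    rw [hQ, sq, mul_formula K hK2, A2, B2,
      show AA x y s * AA x y s - BB x y s * BB x y s = AA x y s ^2 - BB x y s ^2 from by ring,
      show AA x y s * BB x y s + BB x y s * AA x y s = 2 * AA x y s * BB x y s from by ring]
  have hinv : (((A2 x y s : ℝ) : ℍ[ℝ]) + (B2 x y s) • K)⁻¹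
      = (DD x y s)⁻¹ • (((A2 x y s : ℝ) : ℍ[ℝ]) - (B2 x y s) • K) := by
    by_cases hD : DD x y s = 0
    · have h2 : A2 x y s = 0 ∧ B2 x y s = 0 := by
        constructor <;> nlinarith [sq_nonneg (A2 x y s), sq_nonneg (B2 x y s),
          (by rw [← hD, DD] : (A2 x y s)^2 + (B2 x y s)^2 = 0)]
      simp [h2.1, h2.2]
    · apply inv_eq_of_mul_eq_one_right
      rw [mul_smul_comm, sub_eq_add_neg, ← neg_smul, mul_formula K hK2]
      rw [show A2 x y s * A2 x y s - B2 x y s * -B2 x y s = DD x y s by rw [DD]; ring,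
        show A2 x y s * -B2 x y s + B2 x y s * A2 x y s = 0 by ring]
      rw [zero_smul, add_zero, Quaternion.smul_coe, inv_mul_cancel₀ hD]
      rfl
  have hN : q^2 - 2*q*star s + (star s)^2 = EE x y s + K * GG x y s := by
    have h2q : 2*q*star s = (2*x) • star s + (2*y) • (K * star s) := by
      rw [hq, mul_add, add_mul,
        show (2:ℍ[ℝ]) * ((x:ℝ):ℍ[ℝ]) = ((2*x:ℝ):ℍ[ℝ]) from by rw [two_coe, ← Quaternion.coe_mul],
        show (2:ℍ[ℝ]) * (y • K) = (2*y) • K from by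
          rw [two_coe, Quaternion.coe_mul_eq_smul, smul_smul],
        Quaternion.coe_mul_eq_smul, smul_mul_assoc]
    rw [hq2, h2q, EE, GG]
    simp only [mul_sub, mul_smul_comm, Quaternion.mul_coe_eq_smul, smul_sub, smul_smul]
    simp only [coe_eq_smul_one]
    match_scalars <;> ring
  rw [phiFun, hQ2, hN, hinv, alphaQ, betaQ]
  have hKKG : K * (K * GG x y s) = -GG x y s := by
    rw [← mul_assoc, hK2, neg_one_mul]
  simp only [smul_mul_assoc, sub_mul, mul_add, mul_sub, Quaternion.coe_mul_eq_smul,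
    mul_smul_comm, hKKG, smul_sub, smul_add, smul_neg, smul_smul]
  module

noncomputable def emb (K : ℍ[ℝ]) (hK2 : K * K = -1) : ℂ →+* ℍ[ℝ] where
  toFun z := ((z.re : ℝ) : ℍ[ℝ]) + z.im • K
  map_one' := by simp
  map_mul' z w := by
    rw [mul_formula K hK2]
    simp [Complex.mul_re, Complex.mul_im]
  map_zero' := by simp
  map_add' z w := by
    simp only [Complex.add_re, Complex.add_im, Quaternion.coe_add, add_smul]
    abel

lemma emb_apply (K : ℍ[ℝ]) (hK2 : K * K = -1) (z : ℂ) :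
    emb K hK2 z = ((z.re : ℝ) : ℍ[ℝ]) + z.im • K := rfl

lemma emb_norm (K : ℍ[ℝ]) (h0 : K.re = 0) (h1 : ‖K‖ = 1) (hK2 : K * K = -1) (z : ℂ) :
    ‖emb K hK2 z‖ = ‖z‖ := by
  have h := norm_sq_formula K h0 h1 z.re z.im
  have h2 : ‖z‖^2 = z.re^2 + z.im^2 := by
    rw [Complex.sq_norm, Complex.normSq_apply]; ring
  have h3 : ‖emb K hK2 z‖^2 = ‖z‖^2 := by rw [emb_apply, h, h2]
  exact (pow_left_inj₀ (norm_nonneg _) (norm_nonneg _) two_ne_zero).mp h3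

lemma emb_re (K : ℍ[ℝ]) (h0 : K.re = 0) (hK2 : K * K = -1) (z : ℂ) :
    (emb K hK2 z).re = z.re := by
  simp [emb_apply, h0]

lemma emb_star (K : ℍ[ℝ]) (h0 : K.re = 0) (hK2 : K * K = -1) (z : ℂ) :
    emb K hK2 ((starRingEnd ℂ) z) = star (emb K hK2 z) := by
  rw [emb_apply, emb_apply, star_formula K h0]
  simp

lemma emb_coe_real (K : ℍ[ℝ]) (hK2 : K * K = -1) (r : ℝ) :
    emb K hK2 ((r : ℝ) : ℂ) = ((r : ℝ) : ℍ[ℝ]) := by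
  simp [emb_apply]

lemma phi_slice_eval (K : ℍ[ℝ]) (h0 : K.re = 0) (h1 : ‖K‖ = 1) (hK2 : K * K = -1) (σ ζ : ℂ)
    (hne : ζ ≠ σ) (hne' : ζ ≠ (starRingEnd ℂ) σ) :
    phiFun (emb K hK2 σ) (emb K hK2 ζ)
      = emb K hK2 (((ζ - σ)^2)⁻¹) := by
  set f := emb K hK2 with hf
  have key : phiFun (f σ) (f ζ)
      = f (((ζ^2 - 2*(σ.re:ℂ)*ζ + ((‖σ‖^2 : ℝ):ℂ))^2)⁻¹ * (ζ^2 - 2*ζ*((starRingEnd ℂ) σ) + ((starRingEnd ℂ) σ)^2)) := by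
    rw [phiFun, map_mul, map_inv₀, map_pow, map_add, map_sub, map_pow, map_mul, map_mul,
      map_ofNat, map_add, map_sub, map_pow, map_mul, map_mul, map_ofNat, map_pow,
      emb_star K h0 hK2, emb_coe_real, emb_coe_real]
    rw [hf, emb_re K h0 hK2, emb_norm K h0 h1 hK2]
  rw [key]
  congr 1
  have e1 : ((σ.re:ℝ):ℂ) * 2 = σ + (starRingEnd ℂ) σ := by
    rw [Complex.add_conj]; push_cast; ring
  have hfac : ζ^2 - 2*(σ.re:ℂ)*ζ + ((‖σ‖^2 : ℝ):ℂ) = (ζ - σ) * (ζ - (starRingEnd ℂ) σ) := by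
    have e2 : ((‖σ‖^2:ℝ):ℂ) = σ * (starRingEnd ℂ) σ := by
      rw [Complex.mul_conj, Complex.sq_norm]
    linear_combination (-ζ) * e1 + e2
  have hz1 : ζ - σ ≠ 0 := sub_ne_zero.mpr hne
  have hz2 : ζ - (starRingEnd ℂ) σ ≠ 0 := sub_ne_zero.mpr hne'
  rw [hfac]
  field_simp
  ring

set_option maxHeartbeats 1600000 in
/-- For `s ∉ [p]` with `s ∈ ℂ_j`, writing `p_j = Re p + |Im p| j` and
`p̄_j = Re p - |Im p| j`, one has
`|φ_s(p)| ≤ |p_j - s|⁻² + |p̄_j - s|⁻² ≤ 2 dist([p], s)⁻²`. -/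
theorem phi_slice_bound (j : ℍ[ℝ]) (hj : j.re = 0) (hj1 : ‖j‖ = 1)
    (p s : ℍ[ℝ]) (hs : s ∉ quatSphere p) (hsj : s ∈ sliceSet j) :
    ‖phiFun s p‖
        ≤ 1 / ‖(((p.re : ℝ) : ℍ[ℝ]) + ‖p.im‖ • j) - s‖ ^ 2
          + 1 / ‖(((p.re : ℝ) : ℍ[ℝ]) - ‖p.im‖ • j) - s‖ ^ 2 ∧
      1 / ‖(((p.re : ℝ) : ℍ[ℝ]) + ‖p.im‖ • j) - s‖ ^ 2
          + 1 / ‖(((p.re : ℝ) : ℍ[ℝ]) - ‖p.im‖ • j) - s‖ ^ 2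
        ≤ 2 / (Metric.infDist s (quatSphere p)) ^ 2 := by
  have hj2 : j * j = -1 := unit_im_sq j hj hj1
  obtain ⟨u, v, hsuv⟩ := hsj
  set x : ℝ := p.re with hx
  set y : ℝ := ‖p.im‖ with hy
  -- the slice points
  set z : ℍ[ℝ] := ((x : ℝ) : ℍ[ℝ]) + y • j with hzdef
  set w : ℍ[ℝ] := ((x : ℝ) : ℍ[ℝ]) - y • j with hwdef
  have hwz : w = ((x : ℝ) : ℍ[ℝ]) + (-y) • j := by rw [hwdef, neg_smul, sub_eq_add_neg]
  -- im of j
  have hjim : j.im = j := by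
    ext <;> simp [hj]
  have hzmem : z ∈ quatSphere p := by
    constructor
    · simp [hzdef, hj, hx]
    · have : z.im = y • j := by
        simp [hzdef, hjim]
      rw [this, norm_smul, hj1, Real.norm_eq_abs, abs_of_nonneg (by rw [hy]; positivity),
        mul_one]
  have hwmem : w ∈ quatSphere p := by
    constructor
    · simp [hwdef, hj, hx]
    · have : w.im = (-y) • j := by
        simp [hwz, hjim]
      rw [this, norm_smul, hj1, Real.norm_eq_abs, abs_neg,
        abs_of_nonneg (by rw [hy]; positivity), mul_one]
  have hzs : z ≠ s := fun h => hs (h ▸ hzmem)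
  have hws : w ≠ s := fun h => hs (h ▸ hwmem)
  -- complex points
  set σ : ℂ := ⟨u, v⟩ with hσ
  set ζ : ℂ := ⟨x, y⟩ with hζ
  set ζ' : ℂ := ⟨x, -y⟩ with hζ'
  have hembσ : emb j hj2 σ = s := by rw [emb_apply, hsuv]
  have hembζ : emb j hj2 ζ = z := by rw [emb_apply]
  have hembζ' : emb j hj2 ζ' = w := by rw [emb_apply, hwz]
  have hstarz : star z = w := by
    rw [hzdef, star_formula j hj, hwz]
  have hstarw : star w = z := by
    rw [← hstarz, star_star]
  have hne1 : ζ ≠ σ := fun h => hzs (by rw [← hembζ, ← hembσ, h])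
  have hne2 : ζ ≠ (starRingEnd ℂ) σ := by
    intro h
    apply hws
    have hzs' : z = star s := by rw [← hembζ, ← hembσ, h, emb_star j hj hj2]
    rw [← hstarz, hzs', star_star]
  have hne3 : ζ' ≠ σ := fun h => hws (by rw [← hembζ', ← hembσ, h])
  have hne4 : ζ' ≠ (starRingEnd ℂ) σ := by
    intro h
    apply hzs
    have hws' : w = star s := by rw [← hembζ', ← hembσ, h, emb_star j hj hj2]
    rw [← hstarw, hws', star_star]
  -- values on the slice
  have hφz : ‖phiFun s z‖ = 1 / ‖z - s‖^2 := by
    rw [← hembζ, ← hembσ, phi_slice_eval j hj hj1 hj2 σ ζ hne1 hne2,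
      emb_norm j hj hj1 hj2, ← map_sub, emb_norm j hj hj1 hj2]
    rw [norm_inv, norm_pow, one_div]
  have hφw : ‖phiFun s w‖ = 1 / ‖w - s‖^2 := by
    rw [← hembζ', ← hembσ, phi_slice_eval j hj hj1 hj2 σ ζ' hne3 hne4,
      emb_norm j hj hj1 hj2, ← map_sub, emb_norm j hj hj1 hj2]
    rw [norm_inv, norm_pow, one_div]
  -- the imaginary unit for p
  obtain ⟨I, hI0, hI1, hpI⟩ : ∃ I : ℍ[ℝ], I.re = 0 ∧ ‖I‖ = 1 ∧
      p = ((x : ℝ) : ℍ[ℝ]) + y • I := by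
    by_cases him : p.im = 0
    · refine ⟨j, hj, hj1, ?_⟩
      rw [hy, him, norm_zero, zero_smul, add_zero, hx]
      conv_lhs => rw [← Quaternion.re_add_im p, him, add_zero]
    · refine ⟨‖p.im‖⁻¹ • p.im, by simp, ?_, ?_⟩
      · rw [norm_smul, Real.norm_eq_abs, abs_of_nonneg (by positivity),
          inv_mul_cancel₀ (norm_ne_zero_iff.mpr him)]
      · rw [smul_smul, hy, mul_inv_cancel₀ (norm_ne_zero_iff.mpr him), one_smul, hx,
          Quaternion.re_add_im]
  -- representation
  have hp : phiFun s p = alphaQ x y s + I * betaQ x y s := by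
    rw [hpI]; exact key_lemma I hI0 hI1 x y s
  have hzval : phiFun s z = alphaQ x y s + j * betaQ x y s := key_lemma j hj hj1 x y s
  have hwval : phiFun s w = alphaQ x y s + (-j) * betaQ x y s := by
    rw [hwz, neg_smul, ← smul_neg]
    exact key_lemma (-j) (by simp [hj]) (by simp [hj1]) x y s
  set α := alphaQ x y s
  set β := betaQ x y s
  have hsum : phiFun s z + phiFun s w = (2:ℝ) • α := by
    rw [hzval, hwval, neg_mul]; module
  have hdiff : phiFun s z - phiFun s w = (2:ℝ) • (j * β) := by
    rw [hzval, hwval, neg_mul]; module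
  have hnormβ : ‖j * β‖ = ‖β‖ := by rw [norm_mul, hj1, one_mul]
  have hα : ‖α‖ ≤ (‖phiFun s z‖ + ‖phiFun s w‖) / 2 := by
    have h2 : ‖(2:ℝ) • α‖ = 2 * ‖α‖ := by
      rw [norm_smul, Real.norm_eq_abs]; norm_num
    have := norm_add_le (phiFun s z) (phiFun s w)
    rw [hsum, h2] at this
    linarith
  have hβ : ‖β‖ ≤ (‖phiFun s z‖ + ‖phiFun s w‖) / 2 := by
    have h2 : ‖(2:ℝ) • (j * β)‖ = 2 * ‖β‖ := by
      rw [norm_smul, Real.norm_eq_abs, hnormβ]; norm_num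
    have := norm_sub_le (phiFun s z) (phiFun s w)
    rw [hdiff, h2] at this
    linarith
  have hmain : ‖phiFun s p‖ ≤ ‖phiFun s z‖ + ‖phiFun s w‖ := by
    rw [hp]
    calc ‖α + I * β‖ ≤ ‖α‖ + ‖I * β‖ := norm_add_le _ _
      _ = ‖α‖ + ‖β‖ := by rw [norm_mul, hI1, one_mul]
      _ ≤ ‖phiFun s z‖ + ‖phiFun s w‖ := by linarith
  constructor
  · rw [hφz, hφw] at hmain
    exact hmain
  · -- second inequality
    have hcl : IsClosed (quatSphere p) := by
      have : quatSphere p = {q : ℍ[ℝ] | q.re = p.re} ∩ {q : ℍ[ℝ] | ‖q.im‖ = ‖p.im‖} := rfl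
      rw [this]
      exact (isClosed_eq Quaternion.continuous_re continuous_const).inter
        (isClosed_eq (continuous_norm.comp Quaternion.continuous_im) continuous_const)
    have hne : (quatSphere p).Nonempty := ⟨p, rfl, rfl⟩
    have hd : 0 < Metric.infDist s (quatSphere p) :=
      (hcl.notMem_iff_infDist_pos hne).mp hs
    set d := Metric.infDist s (quatSphere p)
    have hdz : d ≤ ‖z - s‖ := by
      have := Metric.infDist_le_dist_of_mem (x := s) hzmem
      rwa [dist_eq_norm, norm_sub_rev] at this
    have hdw : d ≤ ‖w - s‖ := by
      have := Metric.infDist_le_dist_of_mem (x := s) hwmem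
      rwa [dist_eq_norm, norm_sub_rev] at this
    have h1 : 1 / ‖z - s‖^2 ≤ 1 / d^2 :=
      one_div_le_one_div_of_le (by positivity) (by nlinarith)
    have h2 : 1 / ‖w - s‖^2 ≤ 1 / d^2 :=
      one_div_le_one_div_of_le (by positivity) (by nlinarith)
    have : 1 / d^2 + 1 / d^2 = 2 / d^2 := by ring
    linarith
end

section
/- Let f : H → X be a left slice hyperholomorphic function with values in a quaternionic Banach space X such that Λ∘f is bounded on H for every continuous linear functional Λ in the dual of X. Then f is constant. (Liouville theorem for vector-valued slice hyperholomorphic functions.) -/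
open Quaternion


/-- Cauchy-Riemann: real differentiable components satisfying CR give a
complex differentiable function. -/
lemma holo_of_CR (g h : ℝ × ℝ → ℝ) (hg : Differentiable ℝ g) (hh : Differentiable ℝ h)
    (cr1 : ∀ z, fderiv ℝ g z (1, 0) = fderiv ℝ h z (0, 1))
    (cr2 : ∀ z, fderiv ℝ g z (0, 1) + fderiv ℝ h z (1, 0) = 0) :
    Differentiable ℂ (fun z : ℂ => (g (z.re, z.im) : ℂ) + h (z.re, z.im) * Complex.I) := by
  intro z
  set φ : ℂ →L[ℝ] ℝ × ℝ := Complex.equivRealProdCLM.toContinuousLinearMap with hφ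
  set p : ℝ × ℝ := (z.re, z.im) with hp
  set A : ℝ × ℝ →L[ℝ] ℝ := fderiv ℝ g p with hA
  set B : ℝ × ℝ →L[ℝ] ℝ := fderiv ℝ h p with hB
  set c : ℂ := ⟨A (1, 0), B (1, 0)⟩ with hc
  have hG : HasFDerivAt (fun z : ℂ => (g (z.re, z.im) : ℂ) + h (z.re, z.im) * Complex.I)
      (Complex.ofRealCLM.comp (A.comp φ)
        + Complex.I • Complex.ofRealCLM.comp (B.comp φ)) z := by
    have h1 : HasFDerivAt (fun z : ℂ => (g (z.re, z.im) : ℂ))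
        (Complex.ofRealCLM.comp (A.comp φ)) z := by
      exact Complex.ofRealCLM.hasFDerivAt.comp _
        (((hg p).hasFDerivAt).comp z Complex.equivRealProdCLM.hasFDerivAt)
    have h2 : HasFDerivAt (fun z : ℂ => (h (z.re, z.im) : ℂ) * Complex.I)
        (Complex.I • Complex.ofRealCLM.comp (B.comp φ)) z := by
      have := (Complex.ofRealCLM.hasFDerivAt.comp _
        (((hh p).hasFDerivAt).comp z Complex.equivRealProdCLM.hasFDerivAt)).const_mul Complex.I
      simpa [mul_comm] using this
    exact h1.add h2
  have hlin : ((c • (1 : ℂ →L[ℂ] ℂ)).restrictScalars ℝ)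
      = Complex.ofRealCLM.comp (A.comp φ) + Complex.I • Complex.ofRealCLM.comp (B.comp φ) := by
    apply ContinuousLinearMap.ext
    intro w
    have hAe : ∀ a b : ℝ, A (a, b) = a * A (1, 0) + b * A (0, 1) := by
      intro a b
      have hab : ((a, b) : ℝ × ℝ) = a • ((1:ℝ), (0:ℝ)) + b • ((0:ℝ), (1:ℝ)) := by simp
      rw [hab, map_add, map_smul, map_smul]; simp [smul_eq_mul]
    have hBe : ∀ a b : ℝ, B (a, b) = a * B (1, 0) + b * B (0, 1) := by
      intro a b
      have hab : ((a, b) : ℝ × ℝ) = a • ((1:ℝ), (0:ℝ)) + b • ((0:ℝ), (1:ℝ)) := by simp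
      rw [hab, map_add, map_smul, map_smul]; simp [smul_eq_mul]
    have e1 : A (1, 0) = B (0, 1) := cr1 p
    have e2 : A (0, 1) = - B (1, 0) := by have := cr2 p; linarith
    have hφw : φ w = (w.re, w.im) := rfl
    simp only [ContinuousLinearMap.coe_restrictScalars', ContinuousLinearMap.add_apply,
      ContinuousLinearMap.smul_apply, ContinuousLinearMap.comp_apply, hφw,
      ContinuousLinearMap.smul_apply, ContinuousLinearMap.one_apply,
      Complex.ofRealCLM_apply, smul_eq_mul]
    rw [hAe w.re w.im, hBe w.re w.im, e1, e2]
    simp [Complex.ext_iff]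
    constructor <;> (rw [hc]; dsimp only; rw [e1]; ring)
  exact (hasFDerivAt_of_restrictScalars ℝ hG hlin).differentiableAt

lemma const_of_re_bounded (G : ℂ → ℂ) (hG : Differentiable ℂ G) (C : ℝ)
    (hC : ∀ z, (G z).re ≤ C) : ∀ z w, G z = G w := by
  set E : ℂ → ℂ := fun z => Complex.exp (G z) with hE
  have hEd : Differentiable ℂ E := fun z => ((hG z).hasDerivAt.cexp).differentiableAt
  have hEb : Bornology.IsBounded (Set.range E) := by
    rw [Metric.isBounded_iff_subset_closedBall 0]
    refine ⟨Real.exp C, ?_⟩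
    rintro _ ⟨z, rfl⟩
    simp only [Metric.mem_closedBall, dist_zero_right, hE]
    rw [Complex.norm_exp]
    exact Real.exp_le_exp.2 (hC z)
  have hEc : ∀ z, E z = E 0 := fun z => hEd.apply_eq_apply_of_bounded hEb z 0
  have hG' : ∀ z, deriv G z = 0 := by
    intro z
    have h1 : HasDerivAt E (Complex.exp (G z) * deriv G z) z := (hG z).hasDerivAt.cexp
    have h2 : deriv E z = 0 := by
      have : E = fun _ => E 0 := funext hEc
      rw [this]; simp
    rw [h1.deriv] at h2
    exact (mul_eq_zero.1 h2).resolve_left (Complex.exp_ne_zero _)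
  exact fun z w => is_const_of_deriv_eq_zero hG hG' z w

lemma const_of_CR_bounded (g h : ℝ × ℝ → ℝ) (hg : Differentiable ℝ g) (hh : Differentiable ℝ h)
    (cr1 : ∀ z, fderiv ℝ g z (1, 0) = fderiv ℝ h z (0, 1))
    (cr2 : ∀ z, fderiv ℝ g z (0, 1) + fderiv ℝ h z (1, 0) = 0)
    (C : ℝ) (hgb : ∀ p, |g p| ≤ C) :
    ∀ p q : ℝ × ℝ, g p = g q ∧ h p = h q := by
  set G : ℂ → ℂ := fun z => (g (z.re, z.im) : ℂ) + h (z.re, z.im) * Complex.I with hGdef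
  have hGd : Differentiable ℂ G := holo_of_CR g h hg hh cr1 cr2
  have hGre : ∀ z, (G z).re = g (z.re, z.im) := by intro z; simp [hGdef]
  have hGim : ∀ z, (G z).im = h (z.re, z.im) := by intro z; simp [hGdef]
  have hGc : ∀ z w, G z = G w :=
    const_of_re_bounded G hGd C (fun z => by rw [hGre]; exact (abs_le.1 (hgb _)).2)
  intro p q
  have key := hGc ((p.1 : ℂ) + p.2 * Complex.I) ((q.1 : ℂ) + q.2 * Complex.I)
  have hre : ∀ r : ℝ × ℝ, (((r.1 : ℂ) + r.2 * Complex.I).re, ((r.1 : ℂ) + r.2 * Complex.I).im)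
      = r := by intro r; simp
  constructor
  · have := congrArg Complex.re key
    rwa [hGre, hGre, hre p, hre q] at this
  · have := congrArg Complex.im key
    rwa [hGim, hGim, hre p, hre q] at this

variable {X : Type*} [NormedAddCommGroup X] [NormedSpace ℝ X] [Module ℍ[ℝ] X]

/-- `f : ℍ → X` is (entire) left slice hyperholomorphic: there are components
`f₀` (even in `v`) and `f₁` (odd in `v`), real differentiable and satisfying the
Cauchy-Riemann equations `∂_u f₀ - ∂_v f₁ = 0`, `∂_v f₀ + ∂_u f₁ = 0`, with
`f (u + v • j) = f₀ (u,v) + j • f₁ (u,v)` for every purely imaginary unit `j`. -/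
def IsEntireSliceHyperholo (f : ℍ[ℝ] → X) : Prop :=
  ∃ f₀ f₁ : ℝ × ℝ → X,
    (∀ u v : ℝ, f₀ (u, -v) = f₀ (u, v)) ∧
    (∀ u v : ℝ, f₁ (u, -v) = - f₁ (u, v)) ∧
    Differentiable ℝ f₀ ∧ Differentiable ℝ f₁ ∧
    (∀ z : ℝ × ℝ, fderiv ℝ f₀ z (1, 0) = fderiv ℝ f₁ z (0, 1)) ∧
    (∀ z : ℝ × ℝ, fderiv ℝ f₀ z (0, 1) + fderiv ℝ f₁ z (1, 0) = 0) ∧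
    (∀ j : ℍ[ℝ], j.re = 0 → ‖j‖ = 1 → ∀ u v : ℝ,
      f (((u : ℝ) : ℍ[ℝ]) + v • j) = f₀ (u, v) + j • f₁ (u, v))

/-- **Liouville theorem** for vector-valued slice hyperholomorphic functions:
if `f : ℍ → X` is left slice hyperholomorphic and `Λ ∘ f` is bounded for every
continuous linear functional `Λ` in the dual of `X`, then `f` is constant. -/
theorem liouville_slice (f : ℍ[ℝ] → X) (hf : IsEntireSliceHyperholo f)
    (hb : ∀ Λ : X →L[ℝ] ℝ, ∃ C : ℝ, ∀ q : ℍ[ℝ], |Λ (f q)| ≤ C) :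
    ∀ p q : ℍ[ℝ], f p = f q := by
  obtain ⟨f₀, f₁, heven, hodd, hd0, hd1, hcr1, hcr2, hslice⟩ := hf
  set e : ℍ[ℝ] := ⟨0, 1, 0, 0⟩ with he
  have he_re : e.re = 0 := rfl
  have he_norm : ‖e‖ = 1 := by
    have h1 : ‖e‖ = Real.sqrt (normSq e) := rfl
    have h2 : normSq e = 1 := by rw [Quaternion.normSq_def']; simp [he]
    rw [h1, h2, Real.sqrt_one]
  have hne_re : (-e).re = 0 := by simp [he_re]
  have hne_norm : ‖-e‖ = 1 := by rw [norm_neg]; exact he_norm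
  -- each dual functional is constant along f₀ and f₁
  have key : ∀ Λ : X →L[ℝ] ℝ, ∀ p : ℝ × ℝ,
      Λ (f₀ p) = Λ (f₀ (0, 0)) ∧ Λ (f₁ p) = Λ (f₁ (0, 0)) := by
    intro Λ
    obtain ⟨C, hC⟩ := hb Λ
    set g : ℝ × ℝ → ℝ := fun p => Λ (f₀ p) with hg
    set h : ℝ × ℝ → ℝ := fun p => Λ (f₁ p) with hh
    have hgd : Differentiable ℝ g := Λ.differentiable.comp hd0
    have hhd : Differentiable ℝ h := Λ.differentiable.comp hd1
    have hgf : ∀ z, fderiv ℝ g z = Λ.comp (fderiv ℝ f₀ z) := by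
      intro z
      have : HasFDerivAt g (Λ.comp (fderiv ℝ f₀ z)) z :=
        Λ.hasFDerivAt.comp z (hd0 z).hasFDerivAt
      exact this.fderiv
    have hhf : ∀ z, fderiv ℝ h z = Λ.comp (fderiv ℝ f₁ z) := by
      intro z
      have : HasFDerivAt h (Λ.comp (fderiv ℝ f₁ z)) z :=
        Λ.hasFDerivAt.comp z (hd1 z).hasFDerivAt
      exact this.fderiv
    have cr1' : ∀ z, fderiv ℝ g z (1, 0) = fderiv ℝ h z (0, 1) := by
      intro z; rw [hgf, hhf]
      simp only [ContinuousLinearMap.comp_apply]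
      exact congrArg Λ (hcr1 z)
    have cr2' : ∀ z, fderiv ℝ g z (0, 1) + fderiv ℝ h z (1, 0) = 0 := by
      intro z; rw [hgf, hhf]
      simp only [ContinuousLinearMap.comp_apply]
      rw [← map_add, hcr2 z, map_zero]
    have hgb : ∀ p, |g p| ≤ C := by
      rintro ⟨u, v⟩
      have h1 := hslice e he_re he_norm u v
      have h2 := hslice (-e) hne_re hne_norm u v
      have h3 : f (((u : ℝ) : ℍ[ℝ]) + v • e) + f (((u : ℝ) : ℍ[ℝ]) + v • (-e))
          = f₀ (u, v) + f₀ (u, v) := by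
        rw [h1, h2, neg_smul]; abel
      have h4 : g (u, v) + g (u, v)
          = Λ (f (((u : ℝ) : ℍ[ℝ]) + v • e)) + Λ (f (((u : ℝ) : ℍ[ℝ]) + v • (-e))) := by
        rw [← map_add, ← h3, map_add]
      have h5 : |g (u, v) + g (u, v)| ≤ C + C := by
        rw [h4]
        exact (abs_add_le _ _).trans (add_le_add (hC _) (hC _))
      rw [← two_mul, abs_mul, abs_two] at h5
      linarith
    exact fun p => const_of_CR_bounded g h hgd hhd cr1' cr2' C hgb p (0, 0)
  have hf0c : ∀ p, f₀ p = f₀ (0, 0) := by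
    intro p
    exact (NormedSpace.eq_iff_forall_dual_eq (𝕜 := ℝ)).2 fun Λ => (key Λ p).1
  have hf1c : ∀ p, f₁ p = f₁ (0, 0) := by
    intro p
    exact (NormedSpace.eq_iff_forall_dual_eq (𝕜 := ℝ)).2 fun Λ => (key Λ p).2
  have hf10 : f₁ (0, 0) = 0 := by
    have h1 := hodd 0 0
    rw [neg_zero] at h1
    have h2 : (2 : ℝ) • f₁ (0, 0) = 0 := by
      rw [two_smul]
      nth_rewrite 1 [h1]
      rw [neg_add_cancel]
    have := smul_eq_zero.1 h2
    simpa using this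
  have hf1all : ∀ p, f₁ p = 0 := fun p => (hf1c p).trans hf10
  have main : ∀ p : ℍ[ℝ], f p = f₀ (0, 0) := by
    intro p
    by_cases him : p.im = 0
    · have hp : p = ((p.re : ℝ) : ℍ[ℝ]) := by
        conv_lhs => rw [← Quaternion.re_add_im p]
        rw [him, add_zero]
      have h1 := hslice e he_re he_norm p.re 0
      rw [zero_smul, add_zero] at h1
      rw [hp, h1, hf1all, smul_zero, add_zero, hf0c]
    · set j : ℍ[ℝ] := ‖p.im‖⁻¹ • p.im with hj
      have hj_re : j.re = 0 := by simp [hj]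
      have hj_norm : ‖j‖ = 1 := by
        rw [hj, norm_smul]
        simp [abs_of_nonneg, inv_mul_cancel₀, norm_ne_zero_iff.2 him]
      have h1 := hslice j hj_re hj_norm p.re ‖p.im‖
      rw [hj, smul_smul, mul_inv_cancel₀ (norm_ne_zero_iff.2 him), one_smul,
        Quaternion.re_add_im] at h1
      rw [h1, hf1all, smul_zero, add_zero, hf0c]
  intro p q
  rw [main p, main q]
end
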